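/- Let D be a finitely generated abelian group, S a noetherian D-graded ring, and M ⊆ D a finitely generated submonoid. Then the Veronese subring S_M = ⊕_{d∈M} S_d is a noetherian ring. -/

import Mathlib

open DirectSum

section Retraction

/-- A subring retract of a noetherian ring is noetherian. -/
theorem isNoetherianRing_of_retraction {A T : Type*} [CommRing A] [CommRing T]
    [IsNoetherianRing T] (ι : A →+* T) (ρ : T →+ A)
    (h1 : ∀ a, ρ (ι a) = a) (h2 : ∀ a t, ρ (ι a * t) = a * ρ t) :
    IsNoetherianRing A := by
  have key : ∀ I : Ideal A, ∀ x ∈ Ideal.map ι I, ∀ t, ρ (t * x) ∈ I := by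
    intro I x hx
    refine Submodule.span_induction ?_ ?_ ?_ ?_ hx
    · rintro x ⟨b, hb, rfl⟩ t
      rw [mul_comm, h2]
      exact I.mul_mem_right _ hb
    · intro t; simpa using I.zero_mem
    · intro x y _ _ hx hy t
      rw [mul_add, map_add]
      exact I.add_mem (hx t) (hy t)
    · intro s x _ hx t
      rw [smul_eq_mul, ← mul_assoc]
      exact hx (t * s)
  have hrefl : ∀ I J : Ideal A, Ideal.map ι I ≤ Ideal.map ι J → I ≤ J := by
    intro I J h a ha
    have := key J (ι a) (h (Ideal.mem_map_of_mem ι ha)) 1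
    rwa [one_mul, h1] at this
  have hsm : StrictMono (fun I : Ideal A => Ideal.map ι I) := by
    intro I J hIJ
    refine lt_of_le_of_ne (Ideal.map_mono hIJ.le) ?_
    intro h
    exact hIJ.ne (le_antisymm hIJ.le (hrefl J I h.ge))
  rw [isNoetherianRing_iff, isNoetherian_iff']
  exact hsm.wellFoundedGT

end Retraction

section Veronese

variable {D S : Type*} [AddCommGroup D] [DecidableEq D]
    [CommRing S] (𝒜 : D → AddSubgroup S) [GradedRing 𝒜] (M : AddSubmonoid D)

/-- The degree-zero part of `AddMonoidAlgebra S M`, where `single m s` with `s`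
homogeneous of degree `d` is given degree `d - m`. -/
def veroneseAux : Subring (AddMonoidAlgebra S ↥M) where
  carrier := {f | ∀ m : ↥M, f.coeff m ∈ 𝒜 ↑m}
  zero_mem' := fun m => by simpa using zero_mem _
  one_mem' := fun m => by
    classical
    rw [AddMonoidAlgebra.one_def, AddMonoidAlgebra.coeff_single, Finsupp.single_apply]
    split_ifs with h
    · exact h ▸ SetLike.one_mem_graded 𝒜
    · exact zero_mem _
  add_mem' := fun {f g} hf hg m => by simpa using add_mem (hf m) (hg m)
  neg_mem' := fun {f} hf m => by rw [AddMonoidAlgebra.coeff_neg, Finsupp.neg_apply]; exact neg_mem (hf m)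
  mul_mem' := fun {f g} hf hg m => by
    classical
    rw [AddMonoidAlgebra.coeff_mul]
    refine sum_mem fun a _ => sum_mem fun b _ => ?_
    dsimp only
    split_ifs with h
    · have := SetLike.mul_mem_graded (hf a) (hg b)
      rwa [← AddSubmonoid.coe_add, h] at this
    · exact zero_mem _

/-- The retraction `AddMonoidAlgebra S M → AddMonoidAlgebra S M` picking out the
degree-zero part coefficientwise. -/
noncomputable def veroneseRho : AddMonoidAlgebra S ↥M →+ AddMonoidAlgebra S ↥M where
  toFun f := AddMonoidAlgebra.ofCoeff <| Finsupp.onFinset f.coeff.support (fun m => GradedRing.proj 𝒜 ↑m (f.coeff m))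
    (fun m hm => by
      rw [Finsupp.mem_support_iff]
      intro h
      rw [h, map_zero] at hm
      exact hm rfl)
  map_zero' := by ext m; simp
  map_add' f g := by
    ext m
    show GradedRing.proj 𝒜 ↑m ((f + g).coeff m)
      = GradedRing.proj 𝒜 ↑m (f.coeff m) + GradedRing.proj 𝒜 ↑m (g.coeff m)
    rw [show (f + g).coeff m = f.coeff m + g.coeff m from rfl, map_add]

theorem veroneseRho_apply (f : AddMonoidAlgebra S ↥M) (m : ↥M) :
    (veroneseRho 𝒜 M f).coeff m = GradedRing.proj 𝒜 ↑m (f.coeff m) := rfl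

theorem veroneseRho_single (m : ↥M) (s : S) :
    veroneseRho 𝒜 M (AddMonoidAlgebra.single m s) = AddMonoidAlgebra.single m (GradedRing.proj 𝒜 ↑m s) := by
  classical
  ext m'
  rw [veroneseRho_apply]
  rcases eq_or_ne m m' with rfl | h
  · simp
  · rw [AddMonoidAlgebra.coeff_single, AddMonoidAlgebra.coeff_single, Finsupp.single_eq_of_ne' h,
      Finsupp.single_eq_of_ne' h, map_zero]

theorem veroneseRho_single_mul (m : ↥M) (s : S) (hs : s ∈ 𝒜 ↑m)
    (t : AddMonoidAlgebra S ↥M) :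
    veroneseRho 𝒜 M (AddMonoidAlgebra.single m s * t)
      = AddMonoidAlgebra.single m s * veroneseRho 𝒜 M t := by
  classical
  induction t using AddMonoidAlgebra.induction_linear with
  | zero => simp
  | add f g hf hg => rw [mul_add, map_add, map_add, mul_add, hf, hg]
  | single m' s' =>
    rw [AddMonoidAlgebra.single_mul_single, veroneseRho_single, veroneseRho_single,
      AddMonoidAlgebra.single_mul_single]
    congr 1
    have : ((m + m' : ↥M) : D) = ↑m + ↑m' := rfl
    rw [GradedRing.proj_apply, GradedRing.proj_apply, this,
      DirectSum.coe_decompose_mul_add_of_left_mem 𝒜 hs]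

theorem veroneseRho_mul (a : veroneseAux 𝒜 M) (t : AddMonoidAlgebra S ↥M) :
    veroneseRho 𝒜 M (↑a * t) = ↑a * veroneseRho 𝒜 M t := by
  classical
  have hsum : ∑ m ∈ (a : AddMonoidAlgebra S ↥M).coeff.support,
      AddMonoidAlgebra.single m ((a : AddMonoidAlgebra S ↥M).coeff m) = (a : AddMonoidAlgebra S ↥M) :=
    AddMonoidAlgebra.sum_coeff_single _
  conv_lhs => rw [← hsum]
  conv_rhs => rw [← hsum]
  rw [Finset.sum_mul, Finset.sum_mul, map_sum]
  exact Finset.sum_congr rfl fun m _ => veroneseRho_single_mul 𝒜 M m _ (a.2 m) t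

theorem veroneseRho_mem (f : AddMonoidAlgebra S ↥M) :
    veroneseRho 𝒜 M f ∈ veroneseAux 𝒜 M := by
  intro m
  rw [veroneseRho_apply, GradedRing.proj_apply]
  exact SetLike.coe_mem _

theorem veroneseRho_of_mem (a : veroneseAux 𝒜 M) :
    veroneseRho 𝒜 M ↑a = ↑a := by
  ext m
  rw [veroneseRho_apply, GradedRing.proj_apply,
    DirectSum.decompose_of_mem_same 𝒜 (a.2 m)]

end Veronese

/-- The Veronese subring `S_M = ⊕_{d ∈ M} S_d` of a `D`-graded ring, for a submonoid
`M ⊆ D`: since `M` contains `0` and is closed under addition, this is the subring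
generated by the homogeneous pieces of degrees in `M`. -/
def veroneseSubmonoidSubring {D S : Type*} [AddCommGroup D] [CommRing S]
    (𝒜 : D → AddSubgroup S) (M : AddSubmonoid D) : Subring S :=
  Subring.closure (⋃ d ∈ M, (𝒜 d : Set S))

/-- If `S` is a noetherian ring graded by a finitely generated abelian group
`D` and `M ⊆ D` is a finitely generated submonoid, then the Veronese subring `S_M` is
noetherian. -/
theorem stmt_3 {D S : Type*} [AddCommGroup D] [AddGroup.FG D] [DecidableEq D]
    [CommRing S] (𝒜 : D → AddSubgroup S) [GradedRing 𝒜] [IsNoetherianRing S]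
    (M : AddSubmonoid D) (hM : M.FG) :
    IsNoetherianRing (veroneseSubmonoidSubring 𝒜 M) := by
  classical
  -- `AddMonoidAlgebra S M` is noetherian
  haveI : AddMonoid.FG ↥M := (AddMonoid.fg_iff_addSubmonoid_fg M).2 hM
  haveI : IsNoetherianRing (AddMonoidAlgebra S ↥M) :=
    Algebra.FiniteType.isNoetherianRing S (AddMonoidAlgebra S ↥M)
  -- its degree-zero part is noetherian, by the retraction lemma
  haveI : IsNoetherianRing (veroneseAux 𝒜 M) := by
    refine isNoetherianRing_of_retraction (veroneseAux 𝒜 M).subtype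
      { toFun := fun t => ⟨veroneseRho 𝒜 M t, veroneseRho_mem 𝒜 M t⟩
        map_zero' := Subtype.ext (map_zero _)
        map_add' := fun f g => Subtype.ext (map_add (veroneseRho 𝒜 M) f g) } ?_ ?_
    · intro a
      exact Subtype.ext (veroneseRho_of_mem 𝒜 M a)
    · intro a t
      exact Subtype.ext (veroneseRho_mul 𝒜 M a t)
  -- the Veronese subring is the image of the degree-zero part under the
  -- "sum of coefficients" algebra map
  set φ : AddMonoidAlgebra S ↥M →+* S :=
    ((AddMonoidAlgebra.lift (R := S) (M := ↥M) (A := S)) 1).toRingHom with hφ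
  have hφ_single : ∀ (m : ↥M) (s : S), φ (AddMonoidAlgebra.single m s) = s := by
    intro m s
    rw [hφ]
    simp [AddMonoidAlgebra.lift_single]
  have hmaps : ∀ f ∈ veroneseAux 𝒜 M, φ f ∈ veroneseSubmonoidSubring 𝒜 M := by
    intro f hf
    have hrep : φ f = ∑ m ∈ f.coeff.support, φ (AddMonoidAlgebra.single m (f.coeff m)) := by
      conv_lhs => rw [← AddMonoidAlgebra.sum_coeff_single f]
      exact map_finsuppSum φ f.coeff fun m s => AddMonoidAlgebra.single m s
    rw [hrep]
    refine sum_mem fun m _ => ?_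
    rw [hφ_single]
    exact Subring.subset_closure (Set.mem_biUnion m.2 (hf m))
  have hsurj : ∀ s ∈ veroneseSubmonoidSubring 𝒜 M,
      ∃ f ∈ veroneseAux 𝒜 M, φ f = s := by
    intro s hs
    have : veroneseSubmonoidSubring 𝒜 M ≤ (veroneseAux 𝒜 M).map φ := by
      rw [veroneseSubmonoidSubring, Subring.closure_le]
      rintro x hx
      simp only [Set.mem_iUnion, SetLike.mem_coe] at hx
      obtain ⟨d, hd, hxd⟩ := hx
      refine ⟨AddMonoidAlgebra.single (⟨d, hd⟩ : ↥M) x, ?_, hφ_single _ _⟩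
      intro m
      rw [AddMonoidAlgebra.coeff_single, Finsupp.single_apply]
      split_ifs with h
      · subst h; exact hxd
      · exact zero_mem _
    obtain ⟨f, hf, hfs⟩ := this hs
    exact ⟨f, hf, hfs⟩
  refine isNoetherianRing_of_surjective (veroneseAux 𝒜 M) (veroneseSubmonoidSubring 𝒜 M)
    (RingHom.codRestrict (φ.comp (veroneseAux 𝒜 M).subtype) _
      (fun x => hmaps x x.2)) ?_
  rintro ⟨s, hs⟩
  obtain ⟨f, hf, hfs⟩ := hsurj s hs
  exact ⟨⟨f, hf⟩, Subtype.ext hfs⟩
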